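/- Let E(z) = Σ_{n≥0} cₙ(t) zⁿ/n! be the exponential generating function determined by the system E₊′ = t·E₊·E₋, E₋′ = E₊·(1−t+t·E₊), E₊(0)=1, E₋(0)=0, where E₊ and E₋ are the even and odd parts of E. Then W(z)² − t²E₋(z)² = 1, where W(z) = 1 − t + t·E₊(z). -/

import Mathlib

open PowerSeries

/-- If `E` is a formal power series over `ℚ(t)` whose even and odd parts `E₊, E₋`
satisfy `E₊' = t E₊ E₋`, `E₋' = E₊ (1 - t + t E₊)`, `E₊(0) = 1`, `E₋(0) = 0`,
then `W² - t² E₋² = 1` where `W = 1 - t + t E₊`. -/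
theorem stmt18 (E Ep Em : PowerSeries (RatFunc ℚ))
    (t : RatFunc ℚ) (ht : t = RatFunc.X)
    (hEp : Ep = (E + PowerSeries.rescale (-1) E) * PowerSeries.C (2⁻¹ : RatFunc ℚ))
    (hEm : Em = (E - PowerSeries.rescale (-1) E) * PowerSeries.C (2⁻¹ : RatFunc ℚ))
    (hEp' : PowerSeries.derivative (R := RatFunc ℚ) Ep
      = PowerSeries.C t * (Ep * Em))
    (hEm' : PowerSeries.derivative (R := RatFunc ℚ) Em
      = Ep * (1 - PowerSeries.C t + PowerSeries.C t * Ep))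
    (h0p : PowerSeries.constantCoeff Ep = 1)
    (h0m : PowerSeries.constantCoeff Em = 0) :
    (1 - PowerSeries.C t + PowerSeries.C t * Ep) ^ 2
      - (PowerSeries.C t) ^ 2 * Em ^ 2 = 1 := by
  apply PowerSeries.derivative.ext
  · simp only [map_sub, map_add, map_mul, map_one, PowerSeries.derivative_C,
      Derivation.map_one_eq_zero, Derivation.leibniz, Derivation.leibniz_pow, smul_eq_mul, hEp', hEm']
    ring
  · simp [h0p, h0m]
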